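/- Let {Y_i, 1 ≤ i ≤ n} be independent Bernoulli random variables with P(Y_i = 1) = 1/(b+i), where b ≥ 0. Then for all n > l ≥ 1, E(M_l(n)) = (2b + l)/((b+l)(b+l+1)), where M_l(n) = ∑_{k=1}^{n-l-1} Y_k(1−Y_{k+1})⋯(1−Y_{k+l})Y_{k+l+1} + (1−Y_1)⋯(1−Y_l)Y_{l+1} + Y_{n-l}(1−Y_{n-l+1})⋯(1−Y_n). -/

import Mathlib

open MeasureTheory ProbabilityTheory Finset

private lemma reidx (g : ℕ → ℝ) (a l : ℕ) :
    ∏ i ∈ Icc (a+1) (a+l), g i = ∏ j ∈ Icc 1 l, g (a+j) := by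
  rw [← Finset.map_add_left_Icc, Finset.prod_map]
  rfl

private lemma split1 (g h : ℕ → ℝ) (k l : ℕ) :
    (∏ i ∈ Icc k (k+l+1), if i = k ∨ i = k+l+1 then h i else g i)
      = h k * (∏ j ∈ Icc 1 l, g (k+j)) * h (k+l+1) := by
  have hset : Icc k (k+l+1) = insert k (insert (k+l+1) (Icc (k+1) (k+l))) := by
    ext x; simp only [mem_Icc, mem_insert]; omega
  rw [hset, prod_insert (by simp only [mem_insert, mem_Icc]; omega),
      prod_insert (by simp only [mem_Icc]; omega),
      if_pos (Or.inl rfl), if_pos (Or.inr rfl)]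
  have h2 : (∏ i ∈ Icc (k+1) (k+l), if i = k ∨ i = k+l+1 then h i else g i)
      = ∏ j ∈ Icc 1 l, g (k+j) := by
    rw [← reidx g k l]
    refine Finset.prod_congr rfl fun i hi => ?_
    rw [mem_Icc] at hi
    rw [if_neg (by omega)]
  rw [h2]; ring

private lemma split2 (g h : ℕ → ℝ) (l : ℕ) :
    (∏ i ∈ Icc 1 (l+1), if i = l+1 then h i else g i)
      = (∏ j ∈ Icc 1 l, g j) * h (l+1) := by
  rw [Finset.prod_Icc_succ_top (by omega), if_pos rfl]
  congr 1
  refine Finset.prod_congr rfl fun i hi => ?_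
  rw [mem_Icc] at hi
  rw [if_neg (by omega)]

private lemma split3 (g h : ℕ → ℝ) (a l : ℕ) :
    (∏ i ∈ Icc a (a+l), if i = a then h i else g i)
      = h a * ∏ j ∈ Icc 1 l, g (a+j) := by
  have hset : Icc a (a+l) = insert a (Icc (a+1) (a+l)) := by
    ext x; simp only [mem_Icc, mem_insert]; omega
  rw [hset, prod_insert (by simp only [mem_Icc]; omega), if_pos rfl]
  congr 1
  rw [← reidx g a l]
  refine Finset.prod_congr rfl fun i hi => ?_
  rw [mem_Icc] at hi
  rw [if_neg (by omega)]

private lemma tele (b : ℝ) (hb : 0 ≤ b) (a : ℕ) :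
    ∀ l : ℕ, 1 ≤ l → ∏ j ∈ Icc 1 l, (1 - 1/(b + ((a+j : ℕ) : ℝ))) = (b+a)/(b+a+l) := by
  intro l
  induction l with
  | zero => intro h; omega
  | succ l ih =>
    intro _
    have ha0 : (0:ℝ) ≤ a := Nat.cast_nonneg a
    by_cases hl0 : l = 0
    · subst hl0
      rw [Icc_self, prod_singleton]
      have h1 : (0:ℝ) < b + (a+1) := by linarith
      push_cast
      rw [eq_div_iff (by linarith)]
      field_simp
      ring
    · have hl1 : 1 ≤ l := by omega
      have hc : (1:ℝ) ≤ l := by exact_mod_cast hl1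
      rw [Finset.prod_Icc_succ_top (by omega), ih hl1]
      have h1 : (0:ℝ) < b + a + l := by linarith
      have h2 : (0:ℝ) < b + a + l + 1 := by linarith
      push_cast
      field_simp
      ring

open MeasureTheory ProbabilityTheory Finset

private lemma alg3 (x y : ℝ) (hx : x ≠ 0) : 1/x * (x/y) = 1/y := by
  field_simp

private lemma alg2 (x y z : ℝ) : x/y * (1/z) = x/(y*z) := by
  rw [div_mul_div_comm, mul_one]

private lemma alg4 (x : ℝ) (hx : x ≠ 0) (hx1 : x + 1 ≠ 0) : 1/(x*(x+1)) = 1/x - 1/(x+1) := by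
  rw [div_sub_div _ _ hx hx1]
  congr 1
  ring

section
variable {Ω : Type*} {m0 : MeasurableSpace Ω} (μ : Measure Ω) [IsProbabilityMeasure μ]
    (Y : ℕ → Ω → ℝ)

private lemma integrableY (hmeas : ∀ i, Measurable (Y i))
    (h01 : ∀ i ω, Y i ω = 0 ∨ Y i ω = 1) (i : ℕ) : Integrable (Y i) μ :=
  ⟨(hmeas i).aestronglyMeasurable, HasFiniteIntegral.of_bounded (C := 1)
    (Filter.Eventually.of_forall fun ω => by rcases h01 i ω with h|h <;> simp [h])⟩

private lemma intY (b : ℝ) (hb : 0 ≤ b) (hmeas : ∀ i, Measurable (Y i))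
    (h01 : ∀ i ω, Y i ω = 0 ∨ Y i ω = 1)
    (hbern : ∀ i : ℕ, 1 ≤ i → μ {ω | Y i ω = 1} = ENNReal.ofReal (1 / (b + i)))
    (i : ℕ) (hi : 1 ≤ i) : ∫ ω, Y i ω ∂μ = 1 / (b + i) := by
  have hi1 : (1:ℝ) ≤ i := by exact_mod_cast hi
  have hA : MeasurableSet {ω | Y i ω = 1} := hmeas i (measurableSet_singleton 1)
  have hYi : Y i = Set.indicator {ω | Y i ω = 1} (fun _ => (1:ℝ)) := by
    funext ω
    rcases h01 i ω with h | h
    · simp [Set.indicator_apply, h]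
    · simp [Set.indicator_apply, h]
  rw [show (∫ ω, Y i ω ∂μ) = ∫ ω, Set.indicator {ω | Y i ω = 1} (fun _ => (1:ℝ)) ω ∂μ from by
        rw [← hYi],
      integral_indicator_const (1:ℝ) hA, measureReal_def, hbern i hi, smul_eq_mul, mul_one,
      ENNReal.toReal_ofReal (one_div_nonneg.mpr (by linarith))]

private lemma int1mY (b : ℝ) (hb : 0 ≤ b) (hmeas : ∀ i, Measurable (Y i))
    (h01 : ∀ i ω, Y i ω = 0 ∨ Y i ω = 1)
    (hbern : ∀ i : ℕ, 1 ≤ i → μ {ω | Y i ω = 1} = ENNReal.ofReal (1 / (b + i)))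
    (i : ℕ) (hi : 1 ≤ i) : ∫ ω, (1 - Y i ω) ∂μ = 1 - 1 / (b + i) := by
  rw [integral_sub (integrable_const 1) (integrableY μ Y hmeas h01 i),
      intY μ Y b hb hmeas h01 hbern i hi]
  simp

private lemma aux_integrable_one (hmeas : ∀ i, Measurable (Y i))
    (h01 : ∀ i ω, Y i ω = 0 ∨ Y i ω = 1) (f : ℕ → ℝ → ℝ) (hf : ∀ i, Measurable (f i))
    (a : ℕ) : Integrable (fun ω => f a (Y a ω)) μ := by
  refine ⟨((hf a).comp (hmeas a)).aestronglyMeasurable,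
      HasFiniteIntegral.of_bounded (C := max ‖f a 0‖ ‖f a 1‖)
      (Filter.Eventually.of_forall fun ω => ?_)⟩
  rcases h01 a ω with h|h <;> rw [h]
  · exact le_max_left _ _
  · exact le_max_right _ _

private lemma aux_integrable (hmeas : ∀ i, Measurable (Y i))
    (h01 : ∀ i ω, Y i ω = 0 ∨ Y i ω = 1) (f : ℕ → ℝ → ℝ) (hf : ∀ i, Measurable (f i))
    (s : Finset ℕ) : Integrable (fun ω => ∏ i ∈ s, f i (Y i ω)) μ := by
  refine ⟨(Finset.measurable_prod s fun i _ => (hf i).comp (hmeas i)).aestronglyMeasurable,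
      HasFiniteIntegral.of_bounded (C := ∏ i ∈ s, max ‖f i 0‖ ‖f i 1‖)
      (Filter.Eventually.of_forall fun ω => ?_)⟩
  calc ‖∏ i ∈ s, f i (Y i ω)‖ = ∏ i ∈ s, ‖f i (Y i ω)‖ := by
        simp only [Real.norm_eq_abs, Finset.abs_prod]
    _ ≤ ∏ i ∈ s, max ‖f i 0‖ ‖f i 1‖ := by
        refine Finset.prod_le_prod (fun i _ => norm_nonneg _) (fun i _ => ?_)
        rcases h01 i ω with h|h <;> rw [h]
        · exact le_max_left _ _
        · exact le_max_right _ _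

private lemma aux_integral_prod (hmeas : ∀ i, Measurable (Y i))
    (h01 : ∀ i ω, Y i ω = 0 ∨ Y i ω = 1)
    (hindep : iIndepFun Y μ)
    (f : ℕ → ℝ → ℝ) (hf : ∀ i, Measurable (f i)) (s : Finset ℕ) :
    ∫ ω, ∏ i ∈ s, f i (Y i ω) ∂μ = ∏ i ∈ s, ∫ ω, f i (Y i ω) ∂μ := by
  classical
  have hZ : iIndepFun (fun i ω => f i (Y i ω)) μ :=
    hindep.comp f hf
  induction s using Finset.induction_on with
  | empty => simp
  | @insert a s ha ih =>
    have hIF : IndepFun (∏ j ∈ s, fun ω => f j (Y j ω)) (fun ω => f a (Y a ω)) μ :=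
      hZ.indepFun_finset_prod_of_notMem (fun i => (hf i).comp (hmeas i)) ha
    have hprod : (∏ j ∈ s, fun ω => f j (Y j ω)) = fun ω => ∏ j ∈ s, f j (Y j ω) := by
      funext ω; simp
    rw [hprod] at hIF
    have hIF' : IndepFun (fun ω => f a (Y a ω)) (fun ω => ∏ j ∈ s, f j (Y j ω)) μ := hIF.symm
    have hmul := hIF'.integral_fun_mul_eq_mul_integral (aux_integrable_one μ Y hmeas h01 f hf a).1
      (aux_integrable μ Y hmeas h01 f hf s).1
    calc ∫ ω, ∏ i ∈ insert a s, f i (Y i ω) ∂μ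
        = ∫ ω, f a (Y a ω) * ∏ j ∈ s, f j (Y j ω) ∂μ := by
          congr 1; funext ω; rw [Finset.prod_insert ha]
      _ = (∫ ω, f a (Y a ω) ∂μ) * ∫ ω, ∏ j ∈ s, f j (Y j ω) ∂μ := hmul
      _ = ∏ i ∈ insert a s, ∫ ω, f i (Y i ω) ∂μ := by rw [Finset.prod_insert ha, ih]

private lemma term_int (b : ℝ) (hb : 0 ≤ b) (hmeas : ∀ i, Measurable (Y i))
    (h01 : ∀ i ω, Y i ω = 0 ∨ Y i ω = 1)
    (hindep : iIndepFun Y μ)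
    (hbern : ∀ i : ℕ, 1 ≤ i → μ {ω | Y i ω = 1} = ENNReal.ofReal (1 / (b + i)))
    (cond : ℕ → Prop) [DecidablePred cond] (s : Finset ℕ) (hs : ∀ i ∈ s, 1 ≤ i) :
    ∫ ω, ∏ i ∈ s, (if cond i then Y i ω else 1 - Y i ω) ∂μ
      = ∏ i ∈ s, (if cond i then 1/(b+(i:ℝ)) else 1 - 1/(b+(i:ℝ))) := by
  have hf : ∀ i, Measurable (fun x : ℝ => if cond i then x else 1 - x) := by
    intro i
    by_cases h : cond i
    · simp only [h, ↓reduceIte]; exact measurable_id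
    · simp only [h, ↓reduceIte]; exact measurable_const.sub measurable_id
  have h2 : ∫ ω, ∏ i ∈ s, (if cond i then Y i ω else 1 - Y i ω) ∂μ
      = ∏ i ∈ s, ∫ ω, (if cond i then Y i ω else 1 - Y i ω) ∂μ :=
    aux_integral_prod μ Y hmeas h01 hindep (fun i x => if cond i then x else 1 - x) hf s
  rw [h2]
  refine Finset.prod_congr rfl fun i hi => ?_
  by_cases h : cond i
  · simp only [if_pos h]; exact intY μ Y b hb hmeas h01 hbern i (hs i hi)
  · simp only [if_neg h]; exact int1mY μ Y b hb hmeas h01 hbern i (hs i hi)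

end


/-- For independent Bernoulli trials with `P(Y i = 1) = 1/(b+i)` (`b ≥ 0`), the expected
number of memory lapses of length `l` among the first `n` trials (`n > l ≥ 1`) is
`(2b+l)/((b+l)(b+l+1))`. -/
theorem stmt9 {Ω : Type*} {m0 : MeasurableSpace Ω} (μ : Measure Ω) [IsProbabilityMeasure μ]
    (Y : ℕ → Ω → ℝ) (b : ℝ) (hb : 0 ≤ b)
    (hmeas : ∀ i, Measurable (Y i))
    (h01 : ∀ i ω, Y i ω = 0 ∨ Y i ω = 1)
    (hindep : iIndepFun Y μ)
    (hbern : ∀ i : ℕ, 1 ≤ i → μ {ω | Y i ω = 1} = ENNReal.ofReal (1 / (b + i)))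
    (n l : ℕ) (hl : 1 ≤ l) (hln : l < n) :
    ∫ ω, ((∑ k ∈ Finset.Icc 1 (n - l - 1),
          Y k ω * (∏ j ∈ Finset.Icc 1 l, (1 - Y (k + j) ω)) * Y (k + l + 1) ω)
        + (∏ j ∈ Finset.Icc 1 l, (1 - Y j ω)) * Y (l + 1) ω
        + Y (n - l) ω * ∏ j ∈ Finset.Icc 1 l, (1 - Y (n - l + j) ω)) ∂μ
      = (2 * b + l) / ((b + l) * (b + l + 1)) := by
  classical
  set m := n - l - 1 with hm
  set a := n - l with haa
  have ha1 : 1 ≤ a := by omega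
  have hal : a + l = n := by omega
  have hml : l + 1 + m = n := by omega
  have hl1 : (1:ℝ) ≤ l := by exact_mod_cast hl
  -- Step 1: rewrite integrand into pure product form
  have hre : (fun ω => ((∑ k ∈ Finset.Icc 1 m,
          Y k ω * (∏ j ∈ Finset.Icc 1 l, (1 - Y (k + j) ω)) * Y (k + l + 1) ω)
        + (∏ j ∈ Finset.Icc 1 l, (1 - Y j ω)) * Y (l + 1) ω
        + Y a ω * ∏ j ∈ Finset.Icc 1 l, (1 - Y (a + j) ω)))
      = (fun ω => ((∑ k ∈ Finset.Icc 1 m,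
          ∏ i ∈ Finset.Icc k (k+l+1), (if i = k ∨ i = k+l+1 then Y i ω else 1 - Y i ω))
        + (∏ i ∈ Finset.Icc 1 (l+1), (if i = l+1 then Y i ω else 1 - Y i ω))
        + (∏ i ∈ Finset.Icc a (a+l), (if i = a then Y i ω else 1 - Y i ω)))) := by
    funext ω
    rw [split2 (fun i => 1 - Y i ω) (fun i => Y i ω) l,
        split3 (fun i => 1 - Y i ω) (fun i => Y i ω) a l,
        Finset.sum_congr rfl (fun k _ => split1 (fun i => 1 - Y i ω) (fun i => Y i ω) k l)]
  rw [hre]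
  -- Step 2: split the integral
  have hmeasf : ∀ (c : ℕ → Prop) [DecidablePred c],
      ∀ i, Measurable (fun x : ℝ => if c i then x else 1 - x) := by
    intro c _ i
    by_cases h : c i
    · simp only [h, ↓reduceIte]; exact measurable_id
    · simp only [h, ↓reduceIte]; exact measurable_const.sub measurable_id
  have hT1 : ∀ k : ℕ, Integrable (fun ω => ∏ i ∈ Finset.Icc k (k+l+1),
      (if i = k ∨ i = k+l+1 then Y i ω else 1 - Y i ω)) μ := fun k =>
    aux_integrable μ Y hmeas h01 (fun i x => if i = k ∨ i = k+l+1 then x else 1 - x)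
      (hmeasf _) _
  have hT2 : Integrable (fun ω => ∏ i ∈ Finset.Icc 1 (l+1),
      (if i = l+1 then Y i ω else 1 - Y i ω)) μ :=
    aux_integrable μ Y hmeas h01 (fun i x => if i = l+1 then x else 1 - x) (hmeasf _) _
  have hT3 : Integrable (fun ω => ∏ i ∈ Finset.Icc a (a+l),
      (if i = a then Y i ω else 1 - Y i ω)) μ :=
    aux_integrable μ Y hmeas h01 (fun i x => if i = a then x else 1 - x) (hmeasf _) _
  have hS : Integrable (fun ω => ∑ k ∈ Finset.Icc 1 m, ∏ i ∈ Finset.Icc k (k+l+1),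
      (if i = k ∨ i = k+l+1 then Y i ω else 1 - Y i ω)) μ :=
    integrable_finset_sum _ fun k _ => hT1 k
  have hS2 : Integrable (fun ω => (∑ k ∈ Finset.Icc 1 m, ∏ i ∈ Finset.Icc k (k+l+1),
      (if i = k ∨ i = k+l+1 then Y i ω else 1 - Y i ω))
      + ∏ i ∈ Finset.Icc 1 (l+1), (if i = l+1 then Y i ω else 1 - Y i ω)) μ := hS.add hT2
  rw [integral_add hS2 hT3, integral_add hS hT2,
      integral_finset_sum _ (fun k _ => hT1 k)]
  -- Step 3: evaluate each piece
  have hI1 : ∀ k ∈ Finset.Icc 1 m, ∫ ω, (∏ i ∈ Finset.Icc k (k+l+1),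
      (if i = k ∨ i = k+l+1 then Y i ω else 1 - Y i ω)) ∂μ
      = 1/((b+(k:ℝ)+l)*(b+(k:ℝ)+l+1)) := by
    intro k hk
    have hk1 : 1 ≤ k := (Finset.mem_Icc.mp hk).1
    have hkr : (1:ℝ) ≤ k := by exact_mod_cast hk1
    have e1 : ∫ ω, (∏ i ∈ Finset.Icc k (k+l+1),
        (if i = k ∨ i = k+l+1 then Y i ω else 1 - Y i ω)) ∂μ
        = ∏ i ∈ Finset.Icc k (k+l+1),
          (if i = k ∨ i = k+l+1 then 1/(b+(i:ℝ)) else 1 - 1/(b+(i:ℝ))) :=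
      term_int μ Y b hb hmeas h01 hindep hbern (fun i => i = k ∨ i = k+l+1) _
        (by intro i hi; rw [Finset.mem_Icc] at hi; omega)
    rw [e1, split1 (fun i => 1 - 1/(b+(i:ℝ))) (fun i => 1/(b+(i:ℝ))) k l,
        tele b hb k l hl]
    have h1 : (0:ℝ) < b + k := by linarith
    rw [show ((k+l+1 : ℕ) : ℝ) = (k:ℝ) + (l:ℝ) + 1 from by push_cast; ring,
        alg3 (b + (k:ℝ)) (b + (k:ℝ) + (l:ℝ)) h1.ne',
        div_mul_div_comm, one_mul,
        show b + ((k:ℝ) + (l:ℝ) + 1) = b + (k:ℝ) + (l:ℝ) + 1 from by ring]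
  rw [Finset.sum_congr rfl hI1]
  have hI2 : ∫ ω, (∏ i ∈ Finset.Icc 1 (l+1), (if i = l+1 then Y i ω else 1 - Y i ω)) ∂μ
      = b/((b+l)*(b+l+1)) := by
    have e1 : ∫ ω, (∏ i ∈ Finset.Icc 1 (l+1), (if i = l+1 then Y i ω else 1 - Y i ω)) ∂μ
        = ∏ i ∈ Finset.Icc 1 (l+1),
          (if i = l+1 then 1/(b+(i:ℝ)) else 1 - 1/(b+(i:ℝ))) :=
      term_int μ Y b hb hmeas h01 hindep hbern (fun i => i = l+1) _
        (by intro i hi; rw [Finset.mem_Icc] at hi; omega)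
    have e2 : ∏ j ∈ Finset.Icc 1 l, (1 - 1/(b+(j:ℝ))) = b/(b+l) := by
      have := tele b hb 0 l hl
      simpa using this
    rw [e1, split2 (fun i => 1 - 1/(b+(i:ℝ))) (fun i => 1/(b+(i:ℝ))) l, e2]
    rw [show ((l+1 : ℕ) : ℝ) = (l:ℝ) + 1 from by push_cast; ring,
        alg2, show b + ((l:ℝ) + 1) = b + (l:ℝ) + 1 from by ring]
  rw [hI2]
  have hI3 : ∫ ω, (∏ i ∈ Finset.Icc a (a+l), (if i = a then Y i ω else 1 - Y i ω)) ∂μ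
      = 1/(b+(n:ℝ)) := by
    have e1 : ∫ ω, (∏ i ∈ Finset.Icc a (a+l), (if i = a then Y i ω else 1 - Y i ω)) ∂μ
        = ∏ i ∈ Finset.Icc a (a+l), (if i = a then 1/(b+(i:ℝ)) else 1 - 1/(b+(i:ℝ))) :=
      term_int μ Y b hb hmeas h01 hindep hbern (fun i => i = a) _
        (by intro i hi; rw [Finset.mem_Icc] at hi; omega)
    rw [e1, split3 (fun i => 1 - 1/(b+(i:ℝ))) (fun i => 1/(b+(i:ℝ))) a l,
        tele b hb a l hl]
    have har : (1:ℝ) ≤ a := by exact_mod_cast ha1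
    have h1 : (0:ℝ) < b + a := by linarith
    have hnr : (a:ℝ) + l = n := by exact_mod_cast congrArg (Nat.cast : ℕ → ℝ) hal
    have h2 : (0:ℝ) < b + a + l := by linarith
    rw [show b + (n:ℝ) = b + a + l by linarith,
        alg3 (b + (a:ℝ)) (b + (a:ℝ) + (l:ℝ)) h1.ne']
  rw [hI3]
  -- Step 4: compute the telescoping sum
  have key : ∀ M : ℕ, ∑ k ∈ Finset.Icc 1 M, (1/((b+(k:ℝ)+l)*(b+(k:ℝ)+l+1)))
      = 1/(b+l+1) - 1/(b+l+1+M) := by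
    intro M
    induction M with
    | zero => simp
    | succ M ih =>
      rw [Finset.sum_Icc_succ_top (by omega), ih]
      have h0 : (0:ℝ) ≤ M := Nat.cast_nonneg M
      have h1 : (0:ℝ) < b + l + 1 + M := by linarith
      push_cast
      rw [show b + ((M:ℝ) + 1) + (l:ℝ) = b + (l:ℝ) + 1 + (M:ℝ) from by ring,
          show b + (l:ℝ) + 1 + ((M:ℝ) + 1) = b + (l:ℝ) + 1 + (M:ℝ) + 1 from by ring,
          alg4 (b + (l:ℝ) + 1 + (M:ℝ)) h1.ne' (by linarith)]
      ring
  rw [key m]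
  have hmr : (l:ℝ) + 1 + m = n := by exact_mod_cast congrArg (Nat.cast : ℕ → ℝ) hml
  rw [show b + (l:ℝ) + 1 + m = b + n by linarith]
  have h1 : (0:ℝ) < b + l := by linarith
  have h2 : (0:ℝ) < b + l + 1 := by linarith
  have hn1 : (1:ℝ) ≤ n := by exact_mod_cast (by omega : 1 ≤ n)
  have h3 : (0:ℝ) < b + n := by linarith
  field_simp
  ring
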